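/- Let b be a bispecial factor of a Sturmian word u with |b| ≥ 1 containing both letters, and let r₀(b), r₁(b) be its two return words. Then |r₀(b)| + |r₁(b)| = |b| + 2. -/

import Mathlib

open Filter Topology

namespace SturmianPaper

variable {A : Type*} [DecidableEq A]

/-- The factor `w` occurs in the infinite word `u` at position `i`. -/
def FactorAt (u : ℕ → A) (w : List A) (i : ℕ) : Prop :=
  w = (List.range w.length).map fun j => u (i + j)

/-- `w` is a factor of the infinite word `u`. -/
def IsFactor (u : ℕ → A) (w : List A) : Prop := ∃ i, FactorAt u w i

/-- The factor complexity of `u`: the number of factors of length `n`. -/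
noncomputable def complexity (u : ℕ → A) (n : ℕ) : ℕ :=
  Set.ncard {w : List A | IsFactor u w ∧ w.length = n}

/-- A Sturmian word: complexity `n + 1` for every `n` (this forces aperiodicity). -/
def IsSturmian (u : ℕ → A) : Prop := ∀ n, complexity u n = n + 1

/-- `u` is eventually periodic. -/
def EventuallyPeriodic (u : ℕ → A) : Prop :=
  ∃ p > 0, ∃ N, ∀ n ≥ N, u (n + p) = u n

/-- `u` is uniformly recurrent: every factor occurs with bounded gaps. -/
def UniformlyRecurrent (u : ℕ → A) : Prop :=
  ∀ w, IsFactor u w → ∃ B, ∀ k, ∃ i, k ≤ i ∧ i < k + B ∧ FactorAt u w i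

/-- The number of occurrences of `w` in the finite word `x`. -/
def occCount (x w : List A) : ℕ :=
  ((List.range (x.length + 1)).filter fun i => decide (w <+: x.drop i)).length

/-- `v` is a return word of the factor `w` of `u`. -/
def IsReturnWord (u : ℕ → A) (w v : List A) : Prop :=
  v ≠ [] ∧ IsFactor u (v ++ w) ∧ w <+: v ++ w ∧ occCount (v ++ w) w = 2

/-- Recurrence function: `R n + 1` is the maximal length of a complete return word
`v ++ w` over factors `w` of length `n` and return words `v` of `w`. -/
noncomputable def recFun (u : ℕ → A) (n : ℕ) : ℕ :=
  sSup {m | ∃ w v, IsFactor u w ∧ w.length = n ∧ IsReturnWord u w v ∧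
    m + 1 = v.length + w.length}

/-- `v = w ^ (|v| / |w|)`: `v` is a fractional power of `w`,
i.e. a prefix of `w w w ⋯` of length at least `|w|`. -/
def FracPow (w v : List A) : Prop :=
  w ≠ [] ∧ w.length ≤ v.length ∧ ∀ i < v.length, v[i]? = w[i % w.length]?

/-- The set of rational exponents `r` (viewed inside `ℝ`) such that `w ^ r ∈ L(u)`. -/
def expSet (u : ℕ → A) (w : List A) : Set ℝ :=
  {r | ∃ v, IsFactor u v ∧ FracPow w v ∧ r = (v.length : ℝ) / (w.length : ℝ)}

/-- The index of the factor `w` in `u`: `sup {r ∈ ℚ | w ^ r ∈ L(u)}`. -/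
noncomputable def index (u : ℕ → A) (w : List A) : ℝ := sSup (expSet u w)

/-- A finite word is primitive if it is not a proper integer power. -/
def Primitive (w : List A) : Prop :=
  w ≠ [] ∧ ∀ (z : List A) (k : ℕ), 2 ≤ k → w ≠ (List.replicate k z).flatten

/-- `w` is left special in `u` (alphabet `Bool`, `true = A`, `false = B`). -/
def LeftSpecial (u : ℕ → Bool) (w : List Bool) : Prop :=
  IsFactor u (true :: w) ∧ IsFactor u (false :: w)

/-- `w` is right special in `u`. -/
def RightSpecial (u : ℕ → Bool) (w : List Bool) : Prop :=
  IsFactor u (w ++ [true]) ∧ IsFactor u (w ++ [false])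

/-- The Sturmian word of slope `α` and intercept `x₀`, coding the orbit of `x₀`
under the exchange of the two intervals `I_A = [0, α)` (coded `true`) and
`I_B = [α, 1)` (coded `false`); the exchange is the rotation `x ↦ x + (1 - α) mod 1`. -/
noncomputable def sturmianWord (α x₀ : ℝ) : ℕ → Bool :=
  fun n => decide (Int.fract (x₀ + n * (1 - α)) < α)

/-- The Sturmian morphism `A ↦ AᶜB`, `B ↦ A` applied to a finite word. -/
def phiW (c : ℕ) (w : List Bool) : List Bool :=
  (w.map fun b => if b then List.replicate c true ++ [false] else [true]).flatten

/-- The Sturmian morphism `A ↦ AᶜB`, `B ↦ A` applied to an infinite word. -/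
noncomputable def phiInf (c : ℕ) (u : ℕ → Bool) : ℕ → Bool :=
  fun n => (phiW c ((List.range (n + 1)).map u)).getD n false



section ReturnWordAux


def win (u : ℕ → Bool) (i m : ℕ) : List Bool := (List.range m).map fun j => u (i + j)

@[simp] lemma win_length (u : ℕ → Bool) (i m : ℕ) : (win u i m).length = m := by
  simp [win]

lemma win_getElem (u : ℕ → Bool) (i m j : ℕ) (h : j < m) :
    (win u i m)[j]'(by simpa using h) = u (i + j) := by
  simp [win]

lemma win_eq_iff (u u' : ℕ → Bool) (i i' m : ℕ) :
    win u i m = win u' i' m ↔ ∀ j < m, u (i + j) = u' (i' + j) := by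
  constructor
  · intro h j hj
    have := congrArg (fun l => l[j]?) h
    simpa [win, hj] using this
  · intro h
    apply List.ext_getElem (by simp)
    intro j hj _
    rw [win_getElem _ _ _ _ (by simpa using hj), win_getElem _ _ _ _ (by simpa using hj)]
    exact h j (by simpa using hj)

lemma win_add (u : ℕ → Bool) (i m m' : ℕ) :
    win u i (m + m') = win u i m ++ win u (i + m) m' := by
  apply List.ext_getElem (by simp)
  intro j hj _
  simp only [win_length] at hj
  rw [win_getElem _ _ _ _ hj]
  rcases lt_or_ge j m with h | h
  · rw [List.getElem_append_left (by simpa using h), win_getElem _ _ _ _ h]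
  · rw [List.getElem_append_right (by simpa using h)]
    simp only [win_length]
    rw [win_getElem _ _ _ _ (by omega)]
    congr 1; omega

lemma win_take (u : ℕ → Bool) (i m t : ℕ) (h : t ≤ m) :
    (win u i m).take t = win u i t := by
  have : m = t + (m - t) := by omega
  rw [this, win_add, List.take_append_of_le_length (by simp), List.take_of_length_le (by simp)]

lemma win_drop (u : ℕ → Bool) (i m t : ℕ) (h : t ≤ m) :
    (win u i m).drop t = win u (i + t) (m - t) := by
  have : m = t + (m - t) := by omega
  rw [this, win_add]
  simp

lemma win_succ_left (u : ℕ → Bool) (i m : ℕ) :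
    win u i (m + 1) = u i :: win u (i + 1) m := by
  rw [add_comm m 1, win_add]
  simp [win, List.range_succ]

lemma win_succ_right (u : ℕ → Bool) (i m : ℕ) :
    win u i (m + 1) = win u i m ++ [u (i + m)] := by
  rw [win_add]
  simp [win, List.range_succ]


lemma factorAt_iff_win (u : ℕ → Bool) (w : List Bool) (i : ℕ) :
    FactorAt u w i ↔ w = win u i w.length := Iff.rfl

lemma factorAt_win (u : ℕ → Bool) (i m : ℕ) : FactorAt u (win u i m) i := by
  rw [factorAt_iff_win, win_length]

lemma isFactor_win (u : ℕ → Bool) (i m : ℕ) : IsFactor u (win u i m) := ⟨i, factorAt_win u i m⟩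

def Fct (u : ℕ → Bool) (m : ℕ) : Set (List Bool) := {w | IsFactor u w ∧ w.length = m}

lemma mem_Fct (u : ℕ → Bool) (m : ℕ) (w : List Bool) :
    w ∈ Fct u m ↔ (∃ i, w = win u i m) := by
  constructor
  · rintro ⟨⟨i, hi⟩, hl⟩
    exact ⟨i, by rw [← hl]; exact hi⟩
  · rintro ⟨i, rfl⟩
    exact ⟨isFactor_win u i m, win_length u i m⟩

lemma win_mem_Fct (u : ℕ → Bool) (i m : ℕ) : win u i m ∈ Fct u m :=
  (mem_Fct u m _).2 ⟨i, rfl⟩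

lemma Fct_finite (u : ℕ → Bool) (m : ℕ) : (Fct u m).Finite :=
  Set.Finite.subset (List.finite_length_eq Bool m) (fun _ h => h.2)

lemma ncard_Fct (u : ℕ → Bool) (hst : IsSturmian u) (m : ℕ) : (Fct u m).ncard = m + 1 := hst m

-- take/drop membership
lemma take_mem_Fct (u : ℕ → Bool) (m t : ℕ) (h : t ≤ m) (w : List Bool) (hw : w ∈ Fct u m) :
    w.take t ∈ Fct u t := by
  rw [mem_Fct] at hw ⊢
  obtain ⟨i, rfl⟩ := hw
  exact ⟨i, win_take u i m t h⟩

lemma drop_mem_Fct (u : ℕ → Bool) (m t : ℕ) (h : t ≤ m) (w : List Bool) (hw : w ∈ Fct u m) :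
    w.drop t ∈ Fct u (m - t) := by
  rw [mem_Fct] at hw ⊢
  obtain ⟨i, rfl⟩ := hw
  exact ⟨i + t, win_drop u i m t h⟩

lemma Fct_subset_take_image (u : ℕ → Bool) (m : ℕ) :
    Fct u m ⊆ (fun w => List.take m w) '' (Fct u (m + 1)) := by
  intro w hw
  rw [mem_Fct] at hw
  obtain ⟨i, rfl⟩ := hw
  exact ⟨win u i (m+1), win_mem_Fct u i (m+1), win_take u i (m+1) m (by omega)⟩

lemma ncard_Fct_mono (u : ℕ → Bool) (m : ℕ) : (Fct u m).ncard ≤ (Fct u (m + 1)).ncard :=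
  le_trans (Set.ncard_le_ncard (Fct_subset_take_image u m)
      ((Fct_finite u (m+1)).image _))
    (Set.ncard_image_le (Fct_finite u (m+1)))

section B
variable {u : ℕ → Bool} {m : ℕ}

lemma len_of_mem_Fct (u : ℕ → Bool) (m : ℕ) (w : List Bool) (h : w ∈ Fct u m) : w.length = m := h.2


lemma take_append_one (w : List Bool) (a : Bool) (hw : w.length = m) :
    (w ++ [a]).take m = w := by
  rw [← hw, List.take_left]

lemma branching_right {z : List Bool} (hz : z ∈ Fct u m)
    (ht : z ++ [true] ∈ Fct u (m + 1)) (hf : z ++ [false] ∈ Fct u (m + 1)) :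
    (Fct u m).ncard + 1 ≤ (Fct u (m + 1)).ncard := by
  have hzl : z.length = m := len_of_mem_Fct u m z hz
  set T : Set (List Bool) := Fct u (m + 1) \ {z ++ [true]} with hT
  have hcov : Fct u m ⊆ (fun w => List.take m w) '' T := by
    intro y hy
    by_cases hyz : y = z
    · subst hyz
      exact ⟨y ++ [false], ⟨hf, by simp⟩, take_append_one y false hzl⟩
    · obtain ⟨x, hx, hxy⟩ := Fct_subset_take_image u m hy
      refine ⟨x, ⟨hx, ?_⟩, hxy⟩
      simp only [Set.mem_singleton_iff]
      rintro rfl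
      exact hyz (by rw [← hxy]; exact (take_append_one z true hzl))
  have h1 : (Fct u m).ncard ≤ T.ncard :=
    le_trans (Set.ncard_le_ncard hcov (((Fct_finite u (m+1)).diff).image _))
      (Set.ncard_image_le ((Fct_finite u (m+1)).diff))
  have h2 : T.ncard + 1 = (Fct u (m + 1)).ncard :=
    Set.ncard_diff_singleton_add_one ht (Fct_finite u (m+1))
  omega

lemma branching_right₂ {z w : List Bool} (hzw : z ≠ w) (hz : z ∈ Fct u m) (hw : w ∈ Fct u m)
    (hzt : z ++ [true] ∈ Fct u (m + 1)) (hzf : z ++ [false] ∈ Fct u (m + 1))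
    (hwt : w ++ [true] ∈ Fct u (m + 1)) (hwf : w ++ [false] ∈ Fct u (m + 1)) :
    (Fct u m).ncard + 2 ≤ (Fct u (m + 1)).ncard := by
  have hzl : z.length = m := len_of_mem_Fct u m z hz
  have hwl : w.length = m := len_of_mem_Fct u m w hw
  set T : Set (List Bool) := (Fct u (m + 1) \ {z ++ [true]}) \ {w ++ [true]} with hT
  have hne : ∀ (y x : List Bool) (a b : Bool), y.length = m → x.length = m → y ≠ x →
      y ++ [a] ≠ x ++ [b] := by
    intro y x a b hy hx hxy h
    exact hxy (by rw [← take_append_one y a hy, h, take_append_one x b hx])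
  have hcov : Fct u m ⊆ (fun w => List.take m w) '' T := by
    intro y hy
    by_cases hyz : y = z
    · subst hyz
      refine ⟨y ++ [false], ⟨⟨hzf, by simp⟩, ?_⟩, take_append_one y false hzl⟩
      simpa using hne y w false true hzl hwl hzw
    by_cases hyw : y = w
    · subst hyw
      refine ⟨y ++ [false], ⟨⟨hwf, ?_⟩, by simp⟩, take_append_one y false hwl⟩
      simpa using hne y z false true hwl hzl (Ne.symm hzw)
    · obtain ⟨x, hx, hxy⟩ := Fct_subset_take_image u m hy
      refine ⟨x, ⟨⟨hx, ?_⟩, ?_⟩, hxy⟩ <;> simp only [Set.mem_singleton_iff] <;> rintro rfl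
      · exact hyz (by rw [← hxy]; exact (take_append_one z true hzl))
      · exact hyw (by rw [← hxy]; exact (take_append_one w true hwl))
  have hfin : T.Finite := ((Fct_finite u (m+1)).diff).diff
  have h1 : (Fct u m).ncard ≤ T.ncard :=
    le_trans (Set.ncard_le_ncard hcov (hfin.image _)) (Set.ncard_image_le hfin)
  have h2 : T.ncard + 1 = (Fct u (m + 1) \ {z ++ [true]}).ncard :=
    Set.ncard_diff_singleton_add_one
      ⟨hwt, by simpa using hne w z true true hwl hzl (Ne.symm hzw)⟩
      ((Fct_finite u (m+1)).diff)
  have h3 : (Fct u (m + 1) \ {z ++ [true]}).ncard + 1 = (Fct u (m + 1)).ncard :=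
    Set.ncard_diff_singleton_add_one hzt (Fct_finite u (m+1))
  omega

lemma branching_left₂
    (hcov0 : ∀ z ∈ Fct u m, ∃ y ∈ Fct u (m + 1), y.drop 1 = z)
    {z w : List Bool} (hzw : z ≠ w) (hz : z ∈ Fct u m) (hw : w ∈ Fct u m)
    (hzt : true :: z ∈ Fct u (m + 1)) (hzf : false :: z ∈ Fct u (m + 1))
    (hwt : true :: w ∈ Fct u (m + 1)) (hwf : false :: w ∈ Fct u (m + 1)) :
    (Fct u m).ncard + 2 ≤ (Fct u (m + 1)).ncard := by
  set T : Set (List Bool) := (Fct u (m + 1) \ {true :: z}) \ {true :: w} with hT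
  have hcov : Fct u m ⊆ (fun w => List.drop 1 w) '' T := by
    intro y hy
    by_cases hyz : y = z
    · subst hyz
      refine ⟨false :: y, ⟨⟨hzf, by simp⟩, ?_⟩, by simp⟩
      simp only [Set.mem_singleton_iff, List.cons.injEq]
      rintro ⟨h, rfl⟩; exact hzw rfl
    by_cases hyw : y = w
    · subst hyw
      refine ⟨false :: y, ⟨⟨hwf, ?_⟩, by simp⟩, by simp⟩
      simp only [Set.mem_singleton_iff, List.cons.injEq]
      rintro ⟨h, rfl⟩; exact hzw rfl
    · obtain ⟨x, hx, hxy⟩ := hcov0 y hy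
      refine ⟨x, ⟨⟨hx, ?_⟩, ?_⟩, hxy⟩ <;> simp only [Set.mem_singleton_iff] <;> rintro rfl
      · exact hyz (by simpa using hxy.symm)
      · exact hyw (by simpa using hxy.symm)
  have hfin : T.Finite := ((Fct_finite u (m+1)).diff).diff
  have h1 : (Fct u m).ncard ≤ T.ncard :=
    le_trans (Set.ncard_le_ncard hcov (hfin.image _)) (Set.ncard_image_le hfin)
  have h2 : T.ncard + 1 = (Fct u (m + 1) \ {true :: z}).ncard :=
    Set.ncard_diff_singleton_add_one
      ⟨hwt, by simp only [Set.mem_singleton_iff, List.cons.injEq]; rintro ⟨h, rfl⟩; exact hzw rfl⟩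
      ((Fct_finite u (m+1)).diff)
  have h3 : (Fct u (m + 1) \ {true :: z}).ncard + 1 = (Fct u (m + 1)).ncard :=
    Set.ncard_diff_singleton_add_one hzt (Fct_finite u (m+1))
  omega

end B

theorem recur (u : ℕ → Bool) (hst : IsSturmian u) (w : List Bool) (hw : IsFactor u w) (k : ℕ) :
    ∃ i, k ≤ i ∧ FactorAt u w i := by
  rcases eq_or_ne w [] with rfl | hwne
  · exact ⟨k, le_refl k, by simp [FactorAt]⟩
  by_contra hcon
  push_neg at hcon
  set M := w.length with hM
  have hM1 : 1 ≤ M := by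
    cases w with
    | nil => exact absurd rfl hwne
    | cons a l => simp [hM]
  set v : ℕ → Bool := fun s => u (k + s) with hv
  have hwin : ∀ s j, win v s j = win u (k + s) j := by
    intro s j
    rw [win_eq_iff]
    intro t ht
    show u (k + (s + t)) = u (k + s + t)
    rw [add_assoc]
  have hsub : ∀ j, Fct v j ⊆ Fct u j := by
    intro j x hx
    rw [mem_Fct] at hx ⊢
    obtain ⟨s, rfl⟩ := hx
    exact ⟨k + s, by rw [hwin]⟩
  have hwx : w ∉ Fct v M := by
    intro hmem
    rw [mem_Fct] at hmem
    obtain ⟨s, hs⟩ := hmem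
    exact hcon (k + s) (by omega) (by rw [factorAt_iff_win, ← hM, hs, hwin])
  have hwF : w ∈ Fct u M := ⟨hw, rfl⟩
  have hqM : (Fct v M).ncard ≤ M := by
    have hsub2 : Fct v M ⊆ Fct u M \ {w} := fun x hx => ⟨hsub M hx, fun hxw => hwx (hxw ▸ hx)⟩
    calc (Fct v M).ncard ≤ (Fct u M \ {w}).ncard :=
          Set.ncard_le_ncard hsub2 ((Fct_finite u M).diff)
      _ = (Fct u M).ncard - 1 := Set.ncard_diff_singleton_of_mem hwF
      _ ≤ M := by rw [ncard_Fct u hst M]; omega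
  have hq0 : (Fct v 0).ncard = 1 := by
    have : Fct v 0 = {([] : List Bool)} := by
      ext x
      rw [mem_Fct]
      simp [win, Set.mem_singleton_iff, eq_comm]
    rw [this, Set.ncard_singleton]
  -- stall level
  have hstall : ∃ j < M, (Fct v (j + 1)).ncard ≤ (Fct v j).ncard := by
    by_contra hc
    push_neg at hc
    have hgrow : ∀ j ≤ M, j + 1 ≤ (Fct v j).ncard := by
      intro j
      induction j with
      | zero => omega
      | succ j ih => intro hj; have := hc j (by omega); have := ih (by omega); omega
    have := hgrow M le_rfl
    omega
  obtain ⟨j, hjM, hjq⟩ := hstall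
  have huniq : ∀ (z : List Bool) (a a' : Bool),
      z ++ [a] ∈ Fct v (j + 1) → z ++ [a'] ∈ Fct v (j + 1) → a = a' := by
    intro z a a' ha ha'
    by_contra hne
    have hz : z ∈ Fct v j := by
      have := take_mem_Fct v (j+1) j (by omega) _ ha
      simpa [List.take_append_of_le_length,
        show z.length = j by
          have := (mem_Fct v (j+1) _).1 ha
          obtain ⟨i, hi⟩ := this
          have := congrArg List.length hi
          simp [win_length] at this
          omega] using this
    have hboth : z ++ [true] ∈ Fct v (j + 1) ∧ z ++ [false] ∈ Fct v (j + 1) := by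
      cases a <;> cases a' <;> simp_all
    have := branching_right hz hboth.1 hboth.2
    omega
  -- determinism
  set y : ℕ → List Bool := fun s => win v s (j + 1) with hy
  have hdet : ∀ a c, y a = y c → ∀ t, y (a + t) = y (c + t) := by
    intro a c hac t
    induction t with
    | zero => simpa using hac
    | succ t ih =>
      have hd : (y (a + t)).drop 1 = (y (c + t)).drop 1 := by rw [ih]
      rw [hy] at hd
      simp only at hd
      rw [win_drop v (a+t) (j+1) 1 (by omega), win_drop v (c+t) (j+1) 1 (by omega)] at hd
      simp only [Nat.add_sub_cancel] at hd
      have e1 : y (a + (t+1)) = win v (a+t+1) j ++ [v (a+t+1+j)] := by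
        rw [hy]; simp only [← add_assoc]; exact win_succ_right v (a+t+1) j
      have e2 : y (c + (t+1)) = win v (c+t+1) j ++ [v (c+t+1+j)] := by
        rw [hy]; simp only [← add_assoc]; exact win_succ_right v (c+t+1) j
      have m1 : win v (a+t+1) j ++ [v (a+t+1+j)] ∈ Fct v (j+1) := by
        rw [← win_succ_right]; exact win_mem_Fct v _ _
      have m2 : win v (c+t+1) j ++ [v (c+t+1+j)] ∈ Fct v (j+1) := by
        rw [← win_succ_right]; exact win_mem_Fct v _ _
      rw [hd] at m1
      have := huniq _ _ _ m1 m2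
      rw [e1, e2, hd, this]
  -- pigeonhole
  have hfin : Finite ↥(Fct v (j+1)) := (Fct_finite v (j+1)).to_subtype
  obtain ⟨a, c, hac, hfeq⟩ := Finite.exists_ne_map_eq_of_infinite
    (fun s : ℕ => (⟨y s, win_mem_Fct v s (j+1)⟩ : ↥(Fct v (j+1))))
  have hyeq : y a = y c := by simpa [Subtype.ext_iff] using hfeq
  -- main argument
  have main : ∀ a c : ℕ, a < c → y a = y c → False := by
    intro a c hlt hyeq
    set P := c - a with hP
    have hP0 : 0 < P := by omega
    have hper : ∀ s, a ≤ s → v (s + P) = v s := by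
      intro s hs
      set t := s - a with ht
      have hs' : s = a + t := by omega
      have hw2 := hdet a c hyeq t
      rw [hy] at hw2
      simp only at hw2
      rw [win_eq_iff] at hw2
      have := hw2 0 (by omega)
      simp only [add_zero] at this
      rw [hs']
      calc v (a + t + P) = v (c + t) := by congr 1; omega
        _ = v (a + t) := (this).symm
    have hperu : ∀ s, k + a ≤ s → u (s + P) = u s := by
      intro s hs
      set t := s - (k + a) with ht
      have e1 : u (s + P) = v (a + t + P) := by simp only [hv]; congr 1; omega
      have e2 : u s = v (a + t) := by simp only [hv]; congr 1; omega
      rw [e1, e2]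
      exact hper (a + t) (by omega)
    set N := k + a with hN
    have hbound : ∀ m (x : List Bool), x ∈ Fct u m → ∃ i, i < N + P ∧ x = win u i m := by
      intro m x hx
      rw [mem_Fct] at hx
      have hi₀ : x = win u (Nat.find hx) m := Nat.find_spec hx
      refine ⟨Nat.find hx, ?_, hi₀⟩
      by_contra hge
      push_neg at hge
      set i₀ := Nat.find hx with hi0
      have hrep : x = win u (i₀ - P) m := by
        rw [hi₀, win_eq_iff]
        intro t htm
        calc u (i₀ + t) = u (i₀ - P + t + P) := by congr 1; omega
          _ = u (i₀ - P + t) := hperu _ (by omega)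
      exact (Nat.find_min hx (show i₀ - P < i₀ by omega)) hrep
    have hcard : ∀ m, (Fct u m).ncard ≤ N + P := by
      intro m
      have hsub3 : Fct u m ⊆ (fun i => win u i m) '' (↑(Finset.range (N + P)) : Set ℕ) := by
        intro x hx
        obtain ⟨i, hi, he⟩ := hbound m x hx
        exact ⟨i, by simpa using hi, he.symm⟩
      calc (Fct u m).ncard ≤ ((fun i => win u i m) '' (↑(Finset.range (N + P)) : Set ℕ)).ncard :=
            Set.ncard_le_ncard hsub3 ((Finset.range _).finite_toSet.image _)
        _ ≤ ((↑(Finset.range (N + P)) : Set ℕ)).ncard := Set.ncard_image_le (Finset.range _).finite_toSet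
        _ = N + P := by rw [Set.ncard_coe_finset, Finset.card_range]
    have := hcard (N + P)
    rw [ncard_Fct u hst] at this
    omega
  rcases Nat.lt_or_ge a c with hlt | hge
  · exact main a c hlt hyeq
  · exact main c a (by omega) hyeq.symm

section Det
variable {u : ℕ → Bool} {b : List Bool}

lemma mem_Fct_of_append_one {m : ℕ} {z : List Bool} (a : Bool)
    (hz : IsFactor u (z ++ [a])) (hl : z.length = m) : z ++ [a] ∈ Fct u (m + 1) :=
  ⟨hz, by simp [hl]⟩

lemma right_det (hst : IsSturmian u) (hb : b ∈ Fct u b.length) (hrs : RightSpecial u b)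
    {f : List Bool} (hf : f ∈ Fct u b.length) (hfb : f ≠ b) {a a' : Bool}
    (ha : f ++ [a] ∈ Fct u (b.length + 1)) (ha' : f ++ [a'] ∈ Fct u (b.length + 1)) :
    a = a' := by
  by_contra hne
  have hboth : f ++ [true] ∈ Fct u (b.length + 1) ∧ f ++ [false] ∈ Fct u (b.length + 1) := by
    cases a <;> cases a' <;> simp_all
  have := branching_right₂ hfb hf hb hboth.1 hboth.2
    (mem_Fct_of_append_one true hrs.1 rfl) (mem_Fct_of_append_one false hrs.2 rfl)
  rw [ncard_Fct u hst, ncard_Fct u hst] at this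
  omega

lemma left_det (hst : IsSturmian u) (hb : b ∈ Fct u b.length) (hls : LeftSpecial u b)
    {f : List Bool} (hf : f ∈ Fct u b.length) (hfb : f ≠ b) {a a' : Bool}
    (ha : a :: f ∈ Fct u (b.length + 1)) (ha' : a' :: f ∈ Fct u (b.length + 1)) :
    a = a' := by
  have hcov0 : ∀ z ∈ Fct u b.length, ∃ y ∈ Fct u (b.length + 1), y.drop 1 = z := by
    intro z hz
    obtain ⟨i, hi⟩ := (mem_Fct u b.length z).1 hz
    have hzl0 : z.length = b.length := by rw [hi, win_length]
    have hfz : FactorAt u z i := by rw [factorAt_iff_win, hzl0]; exact hi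
    obtain ⟨i', hge, hfa⟩ := recur u hst z ⟨i, hfz⟩ 1
    rw [factorAt_iff_win] at hfa
    have hzl : z.length = b.length := by rw [hi, win_length]
    refine ⟨win u (i' - 1) (b.length + 1), win_mem_Fct u _ _, ?_⟩
    rw [win_drop u _ _ 1 (by omega)]
    simp only [Nat.add_sub_cancel]
    have : i' - 1 + 1 = i' := by omega
    rw [this, ← hzl, ← hfa]
  by_contra hne
  have hboth : true :: f ∈ Fct u (b.length + 1) ∧ false :: f ∈ Fct u (b.length + 1) := by
    cases a <;> cases a' <;> simp_all
  have hbt : true :: b ∈ Fct u (b.length + 1) := ⟨hls.1, by simp⟩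
  have hbf : false :: b ∈ Fct u (b.length + 1) := ⟨hls.2, by simp⟩
  have := branching_left₂ hcov0 hfb hf hb hboth.1 hboth.2 hbt hbf
  rw [ncard_Fct u hst, ncard_Fct u hst] at this
  omega

/-- Complete return window. -/
def CRW (u : ℕ → Bool) (b : List Bool) (i g : ℕ) : Prop :=
  0 < g ∧ win u i b.length = b ∧ win u (i + g) b.length = b ∧
    ∀ j, 0 < j → j < g → win u (i + j) b.length ≠ b

section Prop'
variable {i g i' g' : ℕ}

local notation "n" => b.length

lemma prop_back (hst : IsSturmian u) (hb : b ∈ Fct u b.length) (hls : LeftSpecial u b) (h : CRW u b i g) (h' : CRW u b i' g')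
    {j j' : ℕ} (hj : j < g) (hj' : j' < g')
    (he : win u (i + j) (n + 1) = win u (i' + j') (n + 1)) :
    ∀ s, s ≤ j → s ≤ j' → win u (i + (j - s)) (n + 1) = win u (i' + (j' - s)) (n + 1) := by
  intro s
  induction s with
  | zero => intro _ _; simpa using he
  | succ s ih =>
    intro hs1 hs1'
    have prev := ih (by omega) (by omega)
    have hff' : win u (i + (j - s)) n = win u (i' + (j' - s)) n := by
      have := congrArg (fun l => l.take n) prev
      simpa [win_take] using this
    have hfb : win u (i + (j - s)) n ≠ b := h.2.2.2 (j - s) (by omega) (by omega)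
    have e1 : win u (i + (j - (s+1))) (n + 1)
        = u (i + (j - (s+1))) :: win u (i + (j - s)) n := by
      rw [win_succ_left]
      congr 2
      omega
    have e1' : win u (i' + (j' - (s+1))) (n + 1)
        = u (i' + (j' - (s+1))) :: win u (i' + (j' - s)) n := by
      rw [win_succ_left]
      congr 2
      omega
    have m1 : u (i + (j - (s+1))) :: win u (i + (j - s)) n ∈ Fct u (n + 1) := by
      rw [← e1]; exact win_mem_Fct u _ _
    have m2 : u (i' + (j' - (s+1))) :: win u (i + (j - s)) n ∈ Fct u (n + 1) := by
      rw [hff', ← e1']; exact win_mem_Fct u _ _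
    have := left_det hst hb hls (win_mem_Fct u _ _) hfb m1 m2
    rw [e1, e1', ← hff', this]

lemma prop_fwd (hst : IsSturmian u) (hb : b ∈ Fct u b.length) (hrs : RightSpecial u b) (h : CRW u b i g) (h' : CRW u b i' g')
    (he0 : win u i (n + 1) = win u i' (n + 1)) :
    ∀ s, s < g → s < g' → win u (i + s) (n + 1) = win u (i' + s) (n + 1) := by
  intro s
  induction s with
  | zero => intro _ _; simpa using he0
  | succ s ih =>
    intro hs hs'
    have prev := ih (by omega) (by omega)
    have hff' : win u (i + (s+1)) n = win u (i' + (s+1)) n := by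
      have := congrArg (fun l => l.drop 1) prev
      simp only [win_drop u _ (n+1) 1 (by omega), Nat.add_sub_cancel] at this
      have ea : i + s + 1 = i + (s + 1) := by omega
      have eb : i' + s + 1 = i' + (s + 1) := by omega
      rwa [ea, eb] at this
    have hfb : win u (i + (s+1)) n ≠ b := h.2.2.2 (s+1) (by omega) hs
    have e1 : win u (i + (s+1)) (n + 1)
        = win u (i + (s+1)) n ++ [u (i + (s+1) + n)] := win_succ_right u _ n
    have e1' : win u (i' + (s+1)) (n + 1)
        = win u (i' + (s+1)) n ++ [u (i' + (s+1) + n)] := win_succ_right u _ n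
    have m1 : win u (i + (s+1)) n ++ [u (i + (s+1) + n)] ∈ Fct u (n + 1) := by
      rw [← e1]; exact win_mem_Fct u _ _
    have m2 : win u (i + (s+1)) n ++ [u (i' + (s+1) + n)] ∈ Fct u (n + 1) := by
      rw [hff', ← e1']; exact win_mem_Fct u _ _
    have := right_det hst hb hrs (win_mem_Fct u _ _) hfb m1 m2
    rw [e1, e1', ← hff', this]

lemma prop_zero_le (hst : IsSturmian u) (hb : b ∈ Fct u b.length) (hls : LeftSpecial u b) (h : CRW u b i g) (h' : CRW u b i' g')
    {j j' : ℕ} (hj : j < g) (hj' : j' < g') (hjj' : j ≤ j')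
    (he : win u (i + j) (n + 1) = win u (i' + j') (n + 1)) :
    j = j' ∧ win u i (n + 1) = win u i' (n + 1) := by
  have hback := prop_back hst hb hls h h' hj hj' he j le_rfl hjj'
  simp only [Nat.sub_self] at hback
  have htake := congrArg (fun l => l.take n) hback
  simp only [win_take u _ (n+1) n (by omega)] at htake
  simp only [add_zero] at htake hback
  rw [h.2.1] at htake
  have hj0 : j' - j = 0 := by
    by_contra hne
    exact h'.2.2.2 (j' - j) (by omega) (by omega) htake.symm
  constructor
  · omega
  · rw [hj0, add_zero] at hback
    exact hback

lemma prop_main (hst : IsSturmian u) (hb : b ∈ Fct u b.length) (hrs : RightSpecial u b) (hls : LeftSpecial u b)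
    (h : CRW u b i g) (h' : CRW u b i' g')
    {j j' : ℕ} (hj : j < g) (hj' : j' < g')
    (he : win u (i + j) (n + 1) = win u (i' + j') (n + 1)) :
    j = j' ∧ g = g' ∧ ∀ s, s < g → win u (i + s) (n + 1) = win u (i' + s) (n + 1) := by
  have hz : j = j' ∧ win u i (n + 1) = win u i' (n + 1) := by
    rcases le_total j j' with hle | hle
    · exact prop_zero_le hst hb hls h h' hj hj' hle he
    · have := prop_zero_le hst hb hls h' h hj' hj hle he.symm
      exact ⟨this.1.symm, this.2.symm⟩
  obtain ⟨hjj, he0⟩ := hz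
  have hgg : g = g' := by
    rcases Nat.lt_trichotomy g g' with hlt | heq | hlt
    · exfalso
      have := prop_fwd hst hb hrs h h' he0 (g - 1) (by omega) (by omega)
      have hd := congrArg (fun l => l.drop 1) this
      simp only [win_drop u _ (n+1) 1 (by omega), Nat.add_sub_cancel] at hd
      have ea : i + (g - 1) + 1 = i + g := by omega
      have eb : i' + (g - 1) + 1 = i' + g := by omega
      rw [ea, eb, h.2.2.1] at hd
      exact h'.2.2.2 g h.1 hlt hd.symm
    · exact heq
    · exfalso
      have := prop_fwd hst hb hrs h h' he0 (g' - 1) (by omega) (by omega)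
      have hd := congrArg (fun l => l.drop 1) this
      simp only [win_drop u _ (n+1) 1 (by omega), Nat.add_sub_cancel] at hd
      have ea : i + (g' - 1) + 1 = i + g' := by omega
      have eb : i' + (g' - 1) + 1 = i' + g' := by omega
      rw [ea, eb, h'.2.2.1] at hd
      exact h.2.2.2 g' h'.1 hlt hd
  refine ⟨hjj, hgg, fun s hs => prop_fwd hst hb hrs h h' he0 s hs (by omega)⟩

end Prop'
end Det

section C
variable {u : ℕ → Bool} {b : List Bool}

lemma prefix_iff_win (r : List Bool) (i jj : ℕ) (hx : r = win u i r.length)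
    (hjj : jj + b.length ≤ r.length) :
    (b <+: r.drop jj) ↔ win u (i + jj) b.length = b := by
  constructor
  · intro hpf
    have := List.prefix_iff_eq_take.1 hpf
    rw [hx, win_drop u i _ jj (by omega), win_take u _ _ _ (by omega)] at this
    exact this.symm
  · intro hw
    rw [hx, win_drop u i _ jj (by omega)]
    rw [List.prefix_iff_eq_take, win_take u _ _ _ (by omega), hw]

lemma crw_of_return {r : List Bool} (hr : IsReturnWord u b r) {i : ℕ}
    (hi : FactorAt u (r ++ b) i) :
    CRW u b i r.length ∧ r = win u i r.length := by
  obtain ⟨hrne, _, hpf, hocc⟩ := hr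
  set g := r.length with hg
  set n := b.length with hn
  have hg1 : 0 < g := by
    cases r with
    | nil => exact absurd rfl hrne
    | cons a l => simp [hg]
  have hlen : (r ++ b).length = g + n := by simp [hg, hn]
  have hx : r ++ b = win u i (g + n) := by
    rw [factorAt_iff_win, hlen] at hi
    exact hi
  have hxr : r = win u i g := by
    have := congrArg (fun l => l.take g) hx
    simp only [win_take u i (g+n) g (by omega)] at this
    simpa [win_take u i (g+n) g (by omega), hg, List.take_left] using this
  have hxb : win u (i + g) n = b := by
    have := congrArg (fun l => l.drop g) hx
    simp only [win_drop u i (g+n) g (by omega), Nat.add_sub_cancel_left] at this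
    rw [← this, hg, List.drop_left]
  have hxx : r ++ b = win u i ((r ++ b).length) := by rw [hlen]; exact hx
  have hW1 : win u i n = b := by
    have := (prefix_iff_win (b := b) (r ++ b) i 0 hxx (by simp only [hlen]; omega)).1 (by simpa using hpf)
    simpa using this
  have hW3 : ∀ j, 0 < j → j < g → win u (i + j) n ≠ b := by
    intro j hj0 hjg hwb
    -- then occCount ≥ 3
    have hmem : ∀ m, m ∈ (List.range ((r ++ b).length + 1)).filter
        (fun i' => decide (b <+: (r ++ b).drop i')) ↔
        m < g + n + 1 ∧ b <+: (r ++ b).drop m := by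
      intro m
      rw [List.mem_filter, List.mem_range, decide_eq_true_eq, hlen]
    have h0 : (0 : ℕ) ∈ (List.range ((r ++ b).length + 1)).filter
        (fun i' => decide (b <+: (r ++ b).drop i')) := by
      rw [hmem]; exact ⟨by omega, by simpa using hpf⟩
    have hj : j ∈ (List.range ((r ++ b).length + 1)).filter
        (fun i' => decide (b <+: (r ++ b).drop i')) := by
      rw [hmem]
      exact ⟨by omega, (prefix_iff_win (b := b) (r ++ b) i j hxx (by simp only [hlen]; omega)).2 hwb⟩
    have hgm : g ∈ (List.range ((r ++ b).length + 1)).filter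
        (fun i' => decide (b <+: (r ++ b).drop i')) := by
      rw [hmem]
      exact ⟨by omega, (prefix_iff_win (b := b) (r ++ b) i g hxx (by simp only [hlen]; omega)).2 hxb⟩
    set l := (List.range ((r ++ b).length + 1)).filter
        (fun i' => decide (b <+: (r ++ b).drop i')) with hl
    have hnd : l.Nodup := List.nodup_range.filter _
    have hsubf : ({0, j, g} : Finset ℕ) ⊆ l.toFinset := by
      intro m hm
      simp only [Finset.mem_insert, Finset.mem_singleton] at hm
      rw [List.mem_toFinset]
      rcases hm with rfl | rfl | rfl
      · exact h0
      · exact hj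
      · exact hgm
    have hc3 : ({0, j, g} : Finset ℕ).card = 3 := by
      rw [Finset.card_insert_of_notMem (by simp; omega),
        Finset.card_insert_of_notMem (by simp; omega), Finset.card_singleton]
    have := Finset.card_le_card hsubf
    rw [List.toFinset_card_of_nodup hnd] at this
    have hocc' : l.length = 2 := hocc
    omega
  exact ⟨⟨hg1, hW1, hxb, hW3⟩, hxr⟩

/-- Build a CRW around position p, given a b-occurrence at q₀ ≤ p. -/
lemma exists_crw (hst : IsSturmian u) (hb : IsFactor u b) {p q₀ : ℕ}
    (hq₀ : q₀ ≤ p) (hq : win u q₀ b.length = b) :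
    ∃ i g, CRW u b i g ∧ i ≤ p ∧ p < i + g := by
  set n := b.length with hn
  obtain ⟨i₀, hPi₀, hi₀p, hmax⟩ :
      ∃ i₀, win u i₀ n = b ∧ i₀ ≤ p ∧ ∀ m, i₀ < m → m ≤ p → win u m n ≠ b :=
    ⟨Nat.findGreatest (fun q => win u q n = b) p, Nat.findGreatest_spec (P := fun q => win u q n = b) hq₀ hq,
      Nat.findGreatest_le p, fun m h1 h2 => Nat.findGreatest_is_greatest (P := fun q => win u q n = b) h1 h2⟩
  have hex : ∃ q, p + 1 ≤ q ∧ win u q n = b := by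
    obtain ⟨q, hq1, hq2⟩ := recur u hst b hb (p + 1)
    rw [factorAt_iff_win] at hq2
    exact ⟨q, hq1, hq2.symm⟩
  obtain ⟨i', hi'p, hPi', hmin⟩ :
      ∃ i', p + 1 ≤ i' ∧ win u i' n = b ∧ ∀ m, m < i' → ¬(p + 1 ≤ m ∧ win u m n = b) :=
    ⟨Nat.find hex, (Nat.find_spec hex).1, (Nat.find_spec hex).2,
      fun m hm => Nat.find_min hex hm⟩
  refine ⟨i₀, i' - i₀, ⟨by omega, hPi₀,
    by rw [show i₀ + (i' - i₀) = i' by omega]; exact hPi', ?_⟩, by omega, by omega⟩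
  intro j hj0 hji hwb
  rcases le_or_gt (i₀ + j) p with hle | hgt
  · exact (hmax (i₀ + j) (by omega) hle) hwb
  · exact hmin (i₀ + j) (by omega) ⟨by omega, hwb⟩

end C

end ReturnWordAux

/-- the two return words of a bispecial factor `b` (containing both
letters) of a Sturmian word satisfy `|r₀| + |r₁| = |b| + 2`. -/
theorem return_words_of_bispecial (u : ℕ → Bool) (hst : IsSturmian u)
    (b : List Bool) (hb : IsFactor u b) (hlen : 1 ≤ b.length)
    (hA : true ∈ b) (hB : false ∈ b)
    (hls : LeftSpecial u b) (hrs : RightSpecial u b)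
    (r₀ r₁ : List Bool) (h₀ : IsReturnWord u b r₀) (h₁ : IsReturnWord u b r₁)
    (hne : r₀ ≠ r₁) :
    r₀.length + r₁.length = b.length + 2 := by
  set n := b.length with hn
  have hbF : b ∈ Fct u n := ⟨hb, rfl⟩
  obtain ⟨i₀, hi₀⟩ := h₀.2.1
  obtain ⟨i₁, hi₁⟩ := h₁.2.1
  obtain ⟨crw₀, hr₀⟩ := crw_of_return h₀ hi₀
  obtain ⟨crw₁, hr₁⟩ := crw_of_return h₁ hi₁
  set g₀ := r₀.length with hg₀
  set g₁ := r₁.length with hg₁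
  -- no shared edges between the two return words
  have hshare : ∀ j j', j < g₀ → j' < g₁ →
      win u (i₀ + j) (n + 1) ≠ win u (i₁ + j') (n + 1) := by
    intro j j' hj hj' he
    obtain ⟨-, hgg, hall⟩ := prop_main hst hbF hrs hls crw₀ crw₁ hj hj' he
    apply hne
    rw [hr₀, hr₁, ← hgg]
    rw [win_eq_iff]
    intro s hs
    have := hall s hs
    rw [win_eq_iff] at this
    have := this 0 (by omega)
    simpa using this
  -- injectivity of edges within one return word
  have hinj : ∀ (i g : ℕ), CRW u b i g → Set.InjOn (fun j => win u (i + j) (n + 1))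
      (↑(Finset.range g) : Set ℕ) := by
    intro i g hcrw j hj j' hj' he
    simp only [Finset.coe_range, Set.mem_Iio] at hj hj'
    exact (prop_main hst hbF hrs hls hcrw hcrw hj hj' he).1
  set S₀ : Set (List Bool) := (fun j => win u (i₀ + j) (n + 1)) '' (↑(Finset.range g₀)) with hS₀
  set S₁ : Set (List Bool) := (fun j => win u (i₁ + j) (n + 1)) '' (↑(Finset.range g₁)) with hS₁
  -- subset
  have hsub : Fct u (n + 1) ⊆ S₀ ∪ S₁ := by
    intro v hv
    have hvf : IsFactor u v := hv.1
    obtain ⟨p, hpge, hpfa⟩ := recur u hst v hvf i₀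
    have hvl : v.length = n + 1 := hv.2
    have hvp : v = win u p (n + 1) := by
      rw [factorAt_iff_win, hvl] at hpfa
      exact hpfa
    obtain ⟨i', g', crw', hi'p, hpi'⟩ := exists_crw hst hb hpge crw₀.2.1
    set j' := p - i' with hj'
    have hj'g : j' < g' := by omega
    have hfe : ∀ (i : ℕ), win u i n = b → win u i (n + 1) = b ++ [u (i + n)] := by
      intro i hi
      rw [win_succ_right, hi]
    have tri : u (i' + n) = u (i₀ + n) ∨ u (i' + n) = u (i₁ + n) ∨
        u (i₀ + n) = u (i₁ + n) := by
      have : ∀ x y z : Bool, x = y ∨ x = z ∨ y = z := by decide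
      exact this _ _ _
    have hz₀ : win u (i₀ + 0) (n + 1) = win u i₀ (n + 1) := by rw [add_zero]
    have hz₁ : win u (i₁ + 0) (n + 1) = win u i₁ (n + 1) := by rw [add_zero]
    have hz' : win u (i' + 0) (n + 1) = win u i' (n + 1) := by rw [add_zero]
    rcases tri with htri | htri | htri
    · left
      have he0 : win u (i' + 0) (n + 1) = win u (i₀ + 0) (n + 1) := by
        rw [hz', hz₀, hfe i' crw'.2.1, hfe i₀ crw₀.2.1, htri]
      obtain ⟨-, hgg, hall⟩ := prop_main hst hbF hrs hls crw' crw₀ crw'.1 crw₀.1 he0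
      refine ⟨j', by simp; omega, ?_⟩
      show win u (i₀ + j') (n + 1) = v
      have := hall j' hj'g
      rw [← this, hvp]
      congr 1
      omega
    · right
      have he0 : win u (i' + 0) (n + 1) = win u (i₁ + 0) (n + 1) := by
        rw [hz', hz₁, hfe i' crw'.2.1, hfe i₁ crw₁.2.1, htri]
      obtain ⟨-, hgg, hall⟩ := prop_main hst hbF hrs hls crw' crw₁ crw'.1 crw₁.1 he0
      refine ⟨j', by simp; omega, ?_⟩
      show win u (i₁ + j') (n + 1) = v
      have := hall j' hj'g
      rw [← this, hvp]
      congr 1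
      omega
    · exfalso
      apply hshare 0 0 crw₀.1 crw₁.1
      rw [hz₀, hz₁, hfe i₀ crw₀.2.1, hfe i₁ crw₁.2.1, htri]
  have hsup : S₀ ∪ S₁ ⊆ Fct u (n + 1) := by
    rintro v (⟨j, hj, rfl⟩ | ⟨j, hj, rfl⟩) <;> exact win_mem_Fct u _ _
  have hUnion : Fct u (n + 1) = S₀ ∪ S₁ := Set.Subset.antisymm hsub hsup
  have hdisj : Disjoint S₀ S₁ := by
    rw [Set.disjoint_left]
    rintro v ⟨j, hj, rfl⟩ ⟨j', hj', he⟩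
    simp only [Finset.coe_range, Set.mem_Iio] at hj hj'
    exact hshare j j' hj hj' he.symm
  have hcard₀ : S₀.ncard = g₀ := by
    rw [hS₀, Set.ncard_image_of_injOn (hinj i₀ g₀ crw₀), Set.ncard_coe_finset,
      Finset.card_range]
  have hcard₁ : S₁.ncard = g₁ := by
    rw [hS₁, Set.ncard_image_of_injOn (hinj i₁ g₁ crw₁), Set.ncard_coe_finset,
      Finset.card_range]
  have hfin₀ : S₀.Finite := (Finset.range g₀).finite_toSet.image _
  have hfin₁ : S₁.Finite := (Finset.range g₁).finite_toSet.image _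
  have := ncard_Fct u hst (n + 1)
  rw [hUnion, Set.ncard_union_eq hdisj hfin₀ hfin₁, hcard₀, hcard₁] at this
  omega


end SturmianPaper
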